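/- (Theorem 4.2.) In the IVR model, under consistency, sequential randomization (SR), positivity (POS), monotonicity (MON), and cross-period independence (CI), one has, P-almost surely, P( W_j(1) > W_j(0) for all j = 0,…,T | σ(X_0) ) = E[ (∏_{j=0}^T W_j) · Σ_{(i_0,…,i_T) ∈ {0,1}^{T+1}} ∏_{j=0}^T (−1)^{1−i_j} · 1{Z_j = i_j} / P(Z_j = i_j | G_j) | σ(X_0) ]. -/

import Mathlib

/-!
(Theorem 4.2.)  In the IVR model, under consistency, sequential randomization,
positivity, monotonicity, and cross-period independence,
`P(W_j(1) > W_j(0) ∀ j | σ(X_0))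
  = E[(∏ W_j) · Σ_{i ∈ {0,1}^{T+1}} ∏_j (−1)^{1−i_j} 1{Z_j = i_j} / P(Z_j = i_j | G_j) | σ(X_0)]`
almost surely.
-/

open MeasureTheory ProbabilityTheory MeasurableSpace


open MeasureTheory ProbabilityTheory MeasurableSpace Filter

lemma aux_integrable_mul_indicator {Ω : Type*} {mΩ : MeasurableSpace Ω}
    {μ : Measure Ω} [IsFiniteMeasure μ] {G : MeasurableSpace Ω} (hG : G ≤ mΩ)
    {g : Ω → ℝ} (hg : @Measurable Ω ℝ G _ g) (hg0 : 0 ≤ᵐ[μ] g)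
    {S : Set Ω} (hS : MeasurableSet[mΩ] S)
    {h : Ω → ℝ} (hh : Integrable h μ)
    (hbound : ∀ᵐ ω ∂μ, g ω * (μ[S.indicator (fun _ => (1:ℝ)) | G]) ω ≤ h ω) :
    Integrable (fun ω => g ω * S.indicator (fun _ => (1:ℝ)) ω) μ := by
  set c : Ω → ℝ := μ[S.indicator (fun _ => (1:ℝ)) | G] with hc
  have hgmΩ : Measurable[mΩ] g := hg.mono hG le_rfl
  have hind_meas : Measurable[mΩ] (S.indicator (fun _ => (1:ℝ))) :=
    measurable_const.indicator hS
  have hind_nonneg : ∀ ω, 0 ≤ S.indicator (fun _ => (1:ℝ)) ω := fun ω =>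
    Set.indicator_nonneg (fun _ _ => zero_le_one) ω
  have hind_le_one : ∀ ω, S.indicator (fun _ => (1:ℝ)) ω ≤ 1 := by
    intro ω; by_cases hωS : ω ∈ S <;> simp [Set.indicator_apply, hωS]
  have hind_int : Integrable (S.indicator (fun _ => (1:ℝ))) μ := by
    refine Integrable.mono' (integrable_const (1:ℝ)) hind_meas.aestronglyMeasurable
      (Eventually.of_forall fun ω => ?_)
    rw [Real.norm_eq_abs, abs_of_nonneg (hind_nonneg ω)]
    exact hind_le_one ω
  have hc_nonneg : 0 ≤ᵐ[μ] c :=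
    condExp_nonneg (Eventually.of_forall hind_nonneg)
  set gk : ℕ → Ω → ℝ := fun k ω => min (g ω) k with hgk
  have hgk_meas : ∀ k, @Measurable Ω ℝ G _ (gk k) := fun k => hg.min measurable_const
  have hgk_bd : ∀ k, ∀ᵐ ω ∂μ, ‖gk k ω‖ ≤ (k:ℝ) := by
    intro k
    filter_upwards [hg0] with ω hω
    rw [Real.norm_eq_abs, abs_of_nonneg (le_min hω (Nat.cast_nonneg k))]
    exact min_le_right _ _
  have hfk_int : ∀ k, Integrable (fun ω => gk k ω * S.indicator (fun _ => (1:ℝ)) ω) μ :=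
    fun k => hind_int.bdd_mul (((hgk_meas k).mono hG le_rfl)).aestronglyMeasurable (hgk_bd k)
  have hint_le : ∀ k, ∫ ω, gk k ω * S.indicator (fun _ => (1:ℝ)) ω ∂μ ≤ ∫ ω, h ω ∂μ := by
    intro k
    have hpull : μ[(fun ω => gk k ω * S.indicator (fun _ => (1:ℝ)) ω) | G]
        =ᵐ[μ] fun ω => gk k ω * c ω := by
      have := condExp_stronglyMeasurable_mul_of_bound hG
        ((hgk_meas k).stronglyMeasurable) hind_int (k:ℝ) (hgk_bd k)
      exact this
    have h1 : ∫ ω, gk k ω * S.indicator (fun _ => (1:ℝ)) ω ∂μ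
        = ∫ ω, gk k ω * c ω ∂μ := by
      rw [← integral_condExp hG]
      exact integral_congr_ae hpull
    rw [h1]
    have hgkc_int : Integrable (fun ω => gk k ω * c ω) μ :=
      integrable_condExp.bdd_mul (((hgk_meas k).mono hG le_rfl)).aestronglyMeasurable (hgk_bd k)
    refine integral_mono_ae hgkc_int hh ?_
    filter_upwards [hbound, hc_nonneg] with ω hb hcω
    calc gk k ω * c ω ≤ g ω * c ω :=
          mul_le_mul_of_nonneg_right (min_le_left _ _) hcω
      _ ≤ h ω := hb
  -- lintegral computation
  have hmono : ∀ᵐ ω ∂μ, Monotone fun k : ℕ => ENNReal.ofReal (gk k ω * S.indicator (fun _ => (1:ℝ)) ω) := by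
    filter_upwards [hg0] with ω hω
    intro a b hab
    refine ENNReal.ofReal_le_ofReal (mul_le_mul_of_nonneg_right ?_ (hind_nonneg ω))
    exact min_le_min le_rfl (Nat.cast_le.mpr hab)
  have hisup : ∀ᵐ ω ∂μ, (⨆ k : ℕ, ENNReal.ofReal (gk k ω * S.indicator (fun _ => (1:ℝ)) ω))
      = ENNReal.ofReal (g ω * S.indicator (fun _ => (1:ℝ)) ω) := by
    filter_upwards [hg0] with ω hω
    refine le_antisymm (iSup_le fun k => ?_) (le_iSup_of_le ⌈g ω⌉₊ ?_)
    · exact ENNReal.ofReal_le_ofReal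
        (mul_le_mul_of_nonneg_right (min_le_left _ _) (hind_nonneg ω))
    · have : gk ⌈g ω⌉₊ ω = g ω := min_eq_left (Nat.le_ceil _)
      rw [this]
  have hlin : ∫⁻ ω, ENNReal.ofReal (g ω * S.indicator (fun _ => (1:ℝ)) ω) ∂μ
      ≤ ENNReal.ofReal (∫ ω, h ω ∂μ) := by
    have h2 : ∫⁻ ω, ENNReal.ofReal (g ω * S.indicator (fun _ => (1:ℝ)) ω) ∂μ
        = ⨆ k : ℕ, ∫⁻ ω, ENNReal.ofReal (gk k ω * S.indicator (fun _ => (1:ℝ)) ω) ∂μ := by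
      rw [← lintegral_iSup' (f := fun k ω => ENNReal.ofReal (gk k ω * S.indicator (fun _ => (1:ℝ)) ω)) (fun k => ((((hgk_meas k).mono hG le_rfl).mul hind_meas).ennreal_ofReal).aemeasurable) hmono]
      exact lintegral_congr_ae (hisup.mono fun ω hω => hω.symm)
    rw [h2]
    refine iSup_le fun k => ?_
    have hnn : 0 ≤ᵐ[μ] fun ω => gk k ω * S.indicator (fun _ => (1:ℝ)) ω := by
      filter_upwards [hg0] with ω hω
      exact mul_nonneg (le_min hω (Nat.cast_nonneg k)) (hind_nonneg ω)
    rw [← ofReal_integral_eq_lintegral_ofReal (hfk_int k) hnn]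
    exact ENNReal.ofReal_le_ofReal (hint_le k)
  refine ⟨(hgmΩ.mul hind_meas).aestronglyMeasurable, ?_⟩
  rw [HasFiniteIntegral]
  have heq : ∫⁻ ω, ‖g ω * S.indicator (fun _ => (1:ℝ)) ω‖ₑ ∂μ
      = ∫⁻ ω, ENNReal.ofReal (g ω * S.indicator (fun _ => (1:ℝ)) ω) ∂μ := by
    refine lintegral_congr_ae ?_
    filter_upwards [hg0] with ω hω
    rw [← Real.enorm_eq_ofReal (mul_nonneg hω (hind_nonneg ω))]
  rw [heq]
  exact lt_of_le_of_lt hlin ENNReal.ofReal_lt_top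

lemma integrable_indicator_one' {Ω : Type*} {mΩ : MeasurableSpace Ω} (μ : Measure Ω)
    [IsFiniteMeasure μ] {s : Set Ω} (hs : MeasurableSet s) :
    Integrable (s.indicator fun _ => (1:ℝ)) μ :=
  (integrable_const (1:ℝ)).indicator hs

lemma indicator_one_nonneg {Ω : Type*} (s : Set Ω) (ω : Ω) :
    0 ≤ s.indicator (fun _ => (1:ℝ)) ω :=
  Set.indicator_nonneg (fun _ _ => zero_le_one) ω

lemma indicator_one_le_one {Ω : Type*} (s : Set Ω) (ω : Ω) :
    s.indicator (fun _ => (1:ℝ)) ω ≤ 1 := by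
  by_cases hω : ω ∈ s <;> simp [Set.indicator_apply, hω]

lemma keyA_aux {Ω : Type*} {mΩ : MeasurableSpace Ω} [StandardBorelSpace Ω] [Nonempty Ω]
    (μ : Measure Ω) [IsProbabilityMeasure μ] {T : ℕ}
    (Z : Fin (T + 1) → Ω → Bool) (hZ : ∀ j, Measurable (Z j))
    (mO : MeasurableSpace Ω) (hmOle : mO ≤ mΩ)
    (G : Fin (T + 1) → MeasurableSpace Ω) (hGle : ∀ j, G j ≤ mΩ)
    (m0 : MeasurableSpace Ω) (hm0G : ∀ j, m0 ≤ G j)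
    (hGmono : ∀ j k : Fin (T + 1), j ≤ k → G j ≤ G k)
    (hZG : ∀ j n : Fin (T + 1), (j : ℕ) < (n : ℕ) →
      MeasurableSpace.comap (Z j) inferInstance ≤ G n)
    (hSR : ∀ j, CondIndep (G j) (MeasurableSpace.comap (Z j) inferInstance) mO (hGle j) μ)
    (i : Fin (T + 1) → Bool)
    (hPpos : ∀ j, ∀ᵐ ω ∂μ, 0 < (μ⟦Z j ⁻¹' {i j} | G j⟧) ω)
    {B : Set Ω} (hB : MeasurableSet[mO] B) :
    Integrable (fun ω => B.indicator (fun _ => (1:ℝ)) ω *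
      ∏ j, ((Z j ⁻¹' {i j}).indicator (fun _ => (1:ℝ)) ω * ((μ⟦Z j ⁻¹' {i j} | G j⟧) ω)⁻¹)) μ ∧
    μ[(fun ω => B.indicator (fun _ => (1:ℝ)) ω *
        ∏ j, ((Z j ⁻¹' {i j}).indicator (fun _ => (1:ℝ)) ω * ((μ⟦Z j ⁻¹' {i j} | G j⟧) ω)⁻¹)) | m0]
      =ᵐ[μ] μ[B.indicator (fun _ => (1:ℝ)) | m0] := by
  classical
  set p : Fin (T + 1) → Ω → ℝ := fun j => μ⟦Z j ⁻¹' {i j} | G j⟧ with hp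
  set wgt : Fin (T + 1) → Ω → ℝ :=
    fun j ω => (Z j ⁻¹' {i j}).indicator (fun _ => (1:ℝ)) ω * (p j ω)⁻¹ with hwgt
  set F : ℕ → Ω → ℝ :=
    fun n ω => ∏ j ∈ Finset.univ.filter (fun j : Fin (T + 1) => (j : ℕ) < n), wgt j ω with hF
  have hm0 : m0 ≤ mΩ := (hm0G 0).trans (hGle 0)
  have hSmeas : ∀ j, MeasurableSet[mΩ] (Z j ⁻¹' {i j}) :=
    fun j => (hZ j) (measurableSet_singleton _)
  have hSGn : ∀ j n : Fin (T + 1), (j : ℕ) < (n : ℕ) →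
      MeasurableSet[G n] (Z j ⁻¹' {i j}) :=
    fun j n h => hZG j n h _ ⟨{i j}, measurableSet_singleton _, rfl⟩
  have hpmeas : ∀ j n : Fin (T + 1), j ≤ n → @Measurable Ω ℝ (G n) _ (p j) :=
    fun j n h => (stronglyMeasurable_condExp.measurable).mono (hGmono j n h) le_rfl
  have hwgt_meas : ∀ j n : Fin (T + 1), (j : ℕ) < (n : ℕ) → @Measurable Ω ℝ (G n) _ (wgt j) :=
    fun j n h => (measurable_const.indicator (hSGn j n h)).mul
      ((hpmeas j n (le_of_lt h)).inv)
  have haeP : ∀ᵐ ω ∂μ, ∀ j, 0 < p j ω := ae_all_iff.mpr hPpos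
  have haeF : ∀ᵐ ω ∂μ, ∀ n : ℕ, 0 ≤ F n ω := by
    filter_upwards [haeP] with ω hω
    intro n
    refine Finset.prod_nonneg fun j _ => ?_
    exact mul_nonneg (indicator_one_nonneg _ ω) (le_of_lt (inv_pos.mpr (hω j)))
  have hBm : MeasurableSet[mΩ] B := hmOle _ hB
  have hindB_int : Integrable (B.indicator fun _ => (1:ℝ)) μ := integrable_indicator_one' μ hBm
  have hindB_meas : Measurable[mΩ] (B.indicator fun _ => (1:ℝ)) :=
    measurable_const.indicator hBm
  -- the main induction
  have main : ∀ n : ℕ, n ≤ T + 1 → Integrable (F n) μ ∧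
      Integrable (fun ω => B.indicator (fun _ => (1:ℝ)) ω * F n ω) μ ∧
      μ[(fun ω => B.indicator (fun _ => (1:ℝ)) ω * F n ω) | m0]
        =ᵐ[μ] μ[B.indicator (fun _ => (1:ℝ)) | m0] := by
    intro n
    induction n with
    | zero =>
      intro _
      have hF0 : F 0 = fun _ => (1:ℝ) := by
        funext ω; simp [hF]
      rw [hF0]
      simp only [mul_one]
      exact ⟨integrable_const 1, hindB_int, EventuallyEq.rfl⟩
    | succ n ih =>
      intro hn
      obtain ⟨hFint, hBFint, hcond⟩ := ih (by omega)
      set jn : Fin (T + 1) := ⟨n, by omega⟩ with hjn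
      set S : Set Ω := Z jn ⁻¹' {i jn} with hSdef
      -- product split
      have hsplit : Finset.univ.filter (fun j : Fin (T + 1) => (j : ℕ) < n + 1)
          = insert jn (Finset.univ.filter (fun j : Fin (T + 1) => (j : ℕ) < n)) := by
        ext j
        simp only [Finset.mem_insert, Finset.mem_filter, Finset.mem_univ, true_and]
        constructor
        · intro hj
          rcases Nat.lt_succ_iff_lt_or_eq.mp hj with h | h
          · exact Or.inr h
          · exact Or.inl (Fin.ext h)
        · rintro (rfl | h)
          · exact Nat.lt_succ_self n
          · omega
      have hnotmem : jn ∉ Finset.univ.filter (fun j : Fin (T + 1) => (j : ℕ) < n) := by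
        simp [hjn]
      have hF1 : F (n + 1) = fun ω =>
          (F n ω * (p jn ω)⁻¹) * S.indicator (fun _ => (1:ℝ)) ω := by
        funext ω
        simp only [hF, hsplit, Finset.prod_insert hnotmem, hwgt]
        ring
      -- measurability of F n and g wrt G jn
      have hFmeasGn : @Measurable Ω ℝ (G jn) _ (F n) := by
        refine Finset.measurable_prod _ fun j hj => ?_
        refine hwgt_meas j jn ?_
        simp only [Finset.mem_filter] at hj
        exact hj.2
      have hgmeas : @Measurable Ω ℝ (G jn) _ (fun ω => F n ω * (p jn ω)⁻¹) :=
        hFmeasGn.mul ((hpmeas jn jn le_rfl).inv)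
      have hg0 : 0 ≤ᵐ[μ] fun ω => F n ω * (p jn ω)⁻¹ := by
        filter_upwards [haeF, haeP] with ω h1 h2
        exact mul_nonneg (h1 n) (le_of_lt (inv_pos.mpr (h2 jn)))
      have hSm : MeasurableSet[mΩ] S := hSmeas jn
      -- integrability of F (n+1)
      have hF1int : Integrable (F (n + 1)) μ := by
        rw [hF1]
        refine aux_integrable_mul_indicator (hGle jn) hgmeas hg0 hSm hFint ?_
        filter_upwards [haeP] with ω hω
        have hpe : μ[S.indicator (fun _ => (1:ℝ)) | G jn] = p jn := rfl
        rw [hpe, mul_assoc, inv_mul_cancel₀ (ne_of_gt (hω jn)), mul_one]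
      -- integrability of indB * F (n+1)
      have hBF1int : Integrable (fun ω => B.indicator (fun _ => (1:ℝ)) ω * F (n + 1) ω) μ := by
        refine hF1int.bdd_mul (c := 1) hindB_meas.aestronglyMeasurable ?_
        exact Eventually.of_forall fun ω => by
          rw [Real.norm_eq_abs, abs_of_nonneg (indicator_one_nonneg _ ω)]
          exact indicator_one_le_one _ ω
      refine ⟨hF1int, hBF1int, ?_⟩
      -- the conditional expectation step
      have heqfun : (fun ω => B.indicator (fun _ => (1:ℝ)) ω * F (n + 1) ω)
          = fun ω => (F n ω * (p jn ω)⁻¹) * (B ∩ S).indicator (fun _ => (1:ℝ)) ω := by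
        funext ω
        rw [hF1]
        have hii : (B ∩ S).indicator (fun _ => (1:ℝ)) ω
            = B.indicator (fun _ => (1:ℝ)) ω * S.indicator (fun _ => (1:ℝ)) ω := by
          by_cases hB' : ω ∈ B <;> by_cases hS' : ω ∈ S <;>
            simp [Set.indicator_apply, hB', hS', Set.mem_inter_iff]
        rw [hii]
        ring
      have hBSm : MeasurableSet[mΩ] (B ∩ S) := hBm.inter hSm
      have hBSint : Integrable ((B ∩ S).indicator fun _ => (1:ℝ)) μ :=
        integrable_indicator_one' μ hBSm
      -- pull-out
      have hpull : μ[(fun ω => (F n ω * (p jn ω)⁻¹) * (B ∩ S).indicator (fun _ => (1:ℝ)) ω) | G jn]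
          =ᵐ[μ] fun ω => (F n ω * (p jn ω)⁻¹) * (μ⟦B ∩ S | G jn⟧) ω := by
        have := condExp_mul_of_stronglyMeasurable_left (μ := μ) (m := G jn)
          (f := fun ω => F n ω * (p jn ω)⁻¹)
          (g := (B ∩ S).indicator fun _ => (1:ℝ))
          hgmeas.stronglyMeasurable ?_ hBSint
        · exact this
        · have : (fun ω => F n ω * (p jn ω)⁻¹) * ((B ∩ S).indicator fun _ => (1:ℝ))
              = fun ω => B.indicator (fun _ => (1:ℝ)) ω * F (n + 1) ω := by
            rw [heqfun]; rfl
          rw [this]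
          exact hBF1int
      -- SR: conditional independence
      have hSR' : μ⟦S ∩ B | G jn⟧ =ᵐ[μ] fun ω => p jn ω * (μ⟦B | G jn⟧) ω := by
        have h := (condIndep_iff (G jn) (MeasurableSpace.comap (Z jn) inferInstance) mO
          (hGle jn) ((hZ jn).comap_le) hmOle μ).mp (hSR jn) S B
          ⟨{i jn}, measurableSet_singleton _, rfl⟩ hB
        exact h
      have hSB : B ∩ S = S ∩ B := Set.inter_comm B S
      -- combine: inner conditional expectation equals F n * μ⟦B | G jn⟧ a.e.
      have hinner : μ[(fun ω => B.indicator (fun _ => (1:ℝ)) ω * F (n + 1) ω) | G jn]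
          =ᵐ[μ] fun ω => F n ω * (μ⟦B | G jn⟧) ω := by
        rw [heqfun]
        refine hpull.trans ?_
        have : μ⟦B ∩ S | G jn⟧ =ᵐ[μ] fun ω => p jn ω * (μ⟦B | G jn⟧) ω := by
          rw [hSB]; exact hSR'
        filter_upwards [this, haeP] with ω h1 h2
        rw [h1, mul_assoc, ← mul_assoc ((p jn ω)⁻¹), inv_mul_cancel₀ (h2 jn).ne', one_mul]
      -- backward pull-out
      have hback : μ[(fun ω => F n ω * B.indicator (fun _ => (1:ℝ)) ω) | G jn]
          =ᵐ[μ] fun ω => F n ω * (μ⟦B | G jn⟧) ω := by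
        have := condExp_mul_of_stronglyMeasurable_left (μ := μ) (m := G jn)
          (f := F n) (g := B.indicator fun _ => (1:ℝ))
          hFmeasGn.stronglyMeasurable ?_ hindB_int
        · exact this
        · have : F n * (B.indicator fun _ => (1:ℝ))
              = fun ω => B.indicator (fun _ => (1:ℝ)) ω * F n ω := by
            funext ω; simp [mul_comm]
          rw [this]
          exact hBFint
      -- tower
      calc μ[(fun ω => B.indicator (fun _ => (1:ℝ)) ω * F (n + 1) ω) | m0]
          =ᵐ[μ] μ[μ[(fun ω => B.indicator (fun _ => (1:ℝ)) ω * F (n + 1) ω) | G jn] | m0] :=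
            (condExp_condExp_of_le (hm0G jn) (hGle jn)).symm
        _ =ᵐ[μ] μ[μ[(fun ω => F n ω * B.indicator (fun _ => (1:ℝ)) ω) | G jn] | m0] :=
            condExp_congr_ae (hinner.trans hback.symm)
        _ =ᵐ[μ] μ[(fun ω => F n ω * B.indicator (fun _ => (1:ℝ)) ω) | m0] :=
            condExp_condExp_of_le (hm0G jn) (hGle jn)
        _ =ᵐ[μ] μ[(fun ω => B.indicator (fun _ => (1:ℝ)) ω * F n ω) | m0] := by
            refine condExp_congr_ae (Eventually.of_forall fun ω => ?_)
            simp [mul_comm]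
        _ =ᵐ[μ] μ[B.indicator (fun _ => (1:ℝ)) | m0] := hcond
  -- conclude at n = T + 1
  have hfull : F (T + 1) = fun ω =>
      ∏ j, ((Z j ⁻¹' {i j}).indicator (fun _ => (1:ℝ)) ω * ((μ⟦Z j ⁻¹' {i j} | G j⟧) ω)⁻¹) := by
    funext ω
    simp only [hF]
    rw [Finset.filter_true_of_mem (fun j _ => j.isLt)]
  obtain ⟨_, h2, h3⟩ := main (T + 1) le_rfl
  rw [hfull] at h2 h3
  exact ⟨h2, h3⟩

theorem theorem_4_2
    {Ω : Type*} {mΩ : MeasurableSpace Ω} [StandardBorelSpace Ω] [Nonempty Ω]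
    (μ : Measure Ω) [IsProbabilityMeasure μ]
    (T : ℕ)
    (𝒳 : ℕ → Type*) [∀ j, MeasurableSpace (𝒳 j)] [∀ j, StandardBorelSpace (𝒳 j)]
    (X0 : Ω → 𝒳 0)
    (Z : Fin (T + 1) → Ω → Bool)
    (W : Fin (T + 1) → Bool → Ω → Bool)
    (Y : (j : Fin (T + 1)) → ((Fin (j.1 + 1)) → Bool) → Ω → ℝ)
    (X : (j : Fin (T + 1)) → ((Fin (j.1 + 1)) → Bool) → Ω → 𝒳 (j.1 + 1))
    (hX0 : Measurable X0)
    (hZ : ∀ j, Measurable (Z j))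
    (hW : ∀ j b, Measurable (W j b))
    (hY : ∀ j w, Measurable (Y j w))
    (hX : ∀ j w, Measurable (X j w))
    -- observed variables, via consistency
    (Wobs : Fin (T + 1) → Ω → Bool)
    (hWobs : ∀ j ω, Wobs j ω = W j (Z j ω) ω)
    (Yobs : Fin (T + 1) → Ω → ℝ)
    (hYobs : ∀ j ω, Yobs j ω = Y j (fun k => Wobs (Fin.castLE j.isLt k) ω) ω)
    (Xobs : (j : Fin (T + 1)) → Ω → 𝒳 (j.1 + 1))
    (hXobs : ∀ j ω, Xobs j ω = X j (fun k => Wobs (Fin.castLE j.isLt k) ω) ω)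
    -- σ-algebra 𝒪 generated by X0 and all potential treatments and outcomes
    (mO : MeasurableSpace Ω)
    (hmO : mO = MeasurableSpace.comap X0 inferInstance
        ⊔ (⨆ j, ⨆ b, MeasurableSpace.comap (W j b) inferInstance)
        ⊔ (⨆ j, ⨆ w, (MeasurableSpace.comap (Y j w) inferInstance
              ⊔ MeasurableSpace.comap (X j w) inferInstance)))
    -- observed history σ-algebras G_j = σ(O_0, …, O_j, Z_0, …, Z_{j-1})
    (G : Fin (T + 1) → MeasurableSpace Ω)
    (hGdef : ∀ j, G j = MeasurableSpace.comap X0 inferInstance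
        ⊔ (⨆ k : Fin (T + 1), ⨆ _ : (k : ℕ) < (j : ℕ),
            (MeasurableSpace.comap (Yobs k) inferInstance
              ⊔ MeasurableSpace.comap (Xobs k) inferInstance
              ⊔ MeasurableSpace.comap (Z k) inferInstance)))
    (hGle : ∀ j, G j ≤ mΩ)
    -- (SR) sequential randomization: Z_j ⟂ 𝒪 | G_j
    (hSR : ∀ j, CondIndep (G j) (MeasurableSpace.comap (Z j) inferInstance) mO (hGle j) μ)
    -- (POS) positivity: 0 < P(Z_j = 1 | G_j) < 1 a.s.
    (hPOS : ∀ j, ∀ᵐ ω ∂μ,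
        0 < (μ[fun ω' => if Z j ω' = true then (1 : ℝ) else 0 | G j]) ω ∧
        (μ[fun ω' => if Z j ω' = true then (1 : ℝ) else 0 | G j]) ω < 1)
    -- (MON) monotonicity: P(W_j(1) ≥ W_j(0)) = 1
    (hMON : ∀ j, μ {ω | W j false ω ≤ W j true ω} = 1)
    -- (CI) the pairs (W_j(0), W_j(1)) are mutually conditionally independent given σ(X_0)
    (hCI : iCondIndepFun (MeasurableSpace.comap X0 inferInstance) (hX0.comap_le)
        (fun j ω => (W j false ω, W j true ω)) μ) :
    μ[Set.indicator {ω | ∀ j, W j false ω < W j true ω} (fun _ => (1 : ℝ))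
      | MeasurableSpace.comap X0 inferInstance]
    =ᵐ[μ]
    μ[fun ω => (∏ j, ((Wobs j ω).toNat : ℝ)) *
        ∑ i : Fin (T + 1) → Bool, ∏ j,
          ((-1 : ℝ) ^ (1 - (i j).toNat) * (if Z j ω = i j then (1 : ℝ) else 0) /
            (μ[fun ω' => if Z j ω' = i j then (1 : ℝ) else 0 | G j]) ω)
      | MeasurableSpace.comap X0 inferInstance] := by
  classical
  set m0 : MeasurableSpace Ω := MeasurableSpace.comap X0 inferInstance with hm0def
  have hm0 : m0 ≤ mΩ := hX0.comap_le
  have hmOle : mO ≤ mΩ := by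
    rw [hmO]
    refine sup_le (sup_le hX0.comap_le ?_) ?_
    · exact iSup_le fun j => iSup_le fun b => (hW j b).comap_le
    · exact iSup_le fun j => iSup_le fun w => sup_le (hY j w).comap_le (hX j w).comap_le
  have hm0G : ∀ j, m0 ≤ G j := fun j => by rw [hGdef j]; exact le_sup_left
  have hGmono : ∀ j k : Fin (T + 1), j ≤ k → G j ≤ G k := by
    intro j k hjk
    rw [hGdef j, hGdef k]
    refine sup_le_sup_left ?_ _
    refine iSup_le fun l => iSup_le fun hl => ?_
    exact le_iSup_of_le l (le_iSup_of_le (lt_of_lt_of_le hl hjk) le_rfl)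
  have hZG : ∀ j n : Fin (T + 1), (j : ℕ) < (n : ℕ) →
      MeasurableSpace.comap (Z j) inferInstance ≤ G n := by
    intro j n h
    rw [hGdef n]
    refine le_sup_of_le_right (le_iSup_of_le j (le_iSup_of_le h ?_))
    exact le_sup_right
  -- rewrite the `if` functions as indicators
  have hif_eq : ∀ (j : Fin (T + 1)) (b : Bool),
      (fun ω' => if Z j ω' = b then (1:ℝ) else 0)
        = (Z j ⁻¹' {b}).indicator (fun _ => (1:ℝ)) := by
    intro j b
    funext ω
    simp [Set.indicator_apply]
  -- positivity for both values
  have hPOS' : ∀ (j : Fin (T + 1)) (b : Bool), ∀ᵐ ω ∂μ, 0 < (μ⟦Z j ⁻¹' {b} | G j⟧) ω := by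
    intro j b
    have hjt := hPOS j
    rw [hif_eq j true] at hjt
    cases b
    · have heq : (Z j ⁻¹' {false}).indicator (fun _ => (1:ℝ))
          = (fun _ => (1:ℝ)) - (Z j ⁻¹' {true}).indicator (fun _ => (1:ℝ)) := by
        funext ω
        cases hc : Z j ω <;> simp [Set.indicator_apply, hc]
      have h2 : μ⟦Z j ⁻¹' {false} | G j⟧
          =ᵐ[μ] μ[(fun _ => (1:ℝ)) | G j] - μ[(Z j ⁻¹' {true}).indicator (fun _ => (1:ℝ)) | G j] := by
        rw [show (Set.indicator (Z j ⁻¹' {false}) fun _ => (1:ℝ)) =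
            (fun _ => (1:ℝ)) - (Z j ⁻¹' {true}).indicator (fun _ => (1:ℝ)) from heq]
        exact condExp_sub (integrable_const 1)
          (integrable_indicator_one' μ ((hZ j) (measurableSet_singleton _))) _
      have h3 : μ[(fun _ => (1:ℝ)) | G j] = fun _ => (1:ℝ) := condExp_const (hGle j) 1
      filter_upwards [h2, hjt] with ω hω hlt
      have : (μ⟦Z j ⁻¹' {false} | G j⟧) ω = 1 - (μ⟦Z j ⁻¹' {true} | G j⟧) ω := by
        rw [hω]
        simp [h3]
      rw [this]
      linarith [hlt.2]
    · filter_upwards [hjt] with ω hω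
      exact hω.1
  -- keyA for every treatment pattern
  have keyA := fun i : Fin (T + 1) → Bool => fun {B : Set Ω} (hB : MeasurableSet[mO] B) =>
    keyA_aux μ Z hZ mO hmOle G hGle m0 hm0G hGmono hZG hSR i
      (fun j => hPOS' j (i j)) hB
  -- CI: product formula
  have hpairm : ∀ j, @Measurable Ω (Bool × Bool) mΩ _ (fun ω => (W j false ω, W j true ω)) :=
    fun j => (hW j false).prodMk (hW j true)
  have hCIprod : ∀ sets : Fin (T + 1) → Set (Bool × Bool),
      μ⟦⋂ j, (fun ω => (W j false ω, W j true ω)) ⁻¹' sets j | m0⟧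
        =ᵐ[μ] fun ω => ∏ j, (μ⟦(fun ω' => (W j false ω', W j true ω')) ⁻¹' sets j | m0⟧) ω := by
    intro sets
    have h := (iCondIndepFun_iff_condExp_inter_preimage_eq_mul (m' := m0)
      (hm' := hX0.comap_le)
      (fun _ => inferInstance) (fun j ω => (W j false ω, W j true ω)) hpairm).mp hCI
      Finset.univ (sets := sets) (fun j _ => (Set.to_countable _).measurableSet)
    have h1 : (⋂ j ∈ Finset.univ, (fun ω => (W j false ω, W j true ω)) ⁻¹' sets j)
        = ⋂ j, (fun ω => (W j false ω, W j true ω)) ⁻¹' sets j := by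
      simp
    rw [h1] at h
    refine h.trans ?_
    rw [Finset.prod_fn]
  -- pair preimage descriptions
  have hseteq : ∀ (j : Fin (T + 1)) (b : Bool),
      W j b ⁻¹' {true}
        = (fun ω => (W j false ω, W j true ω)) ⁻¹'
            {x : Bool × Bool | (bif b then x.2 else x.1) = true} := by
    intro j b
    ext ω
    cases b <;> simp
  -- MON a.e.
  have hMON' : ∀ j, ∀ᵐ ω ∂μ, W j false ω ≤ W j true ω := by
    intro j
    have hms : MeasurableSet[mΩ] ((W j false ⁻¹' {true}) ∩ (W j true ⁻¹' {false})) :=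
      ((hW j false) (measurableSet_singleton _)).inter ((hW j true) (measurableSet_singleton _))
    have hsetc : {ω | W j false ω ≤ W j true ω}
        = ((W j false ⁻¹' {true}) ∩ (W j true ⁻¹' {false}))ᶜ := by
      ext ω
      simp only [Set.mem_setOf_eq, Set.mem_compl_iff, Set.mem_inter_iff, Set.mem_preimage,
        Set.mem_singleton_iff]
      cases h0 : W j false ω <;> cases h1 : W j true ω <;> simp
    have h0 : μ ((W j false ⁻¹' {true}) ∩ (W j true ⁻¹' {false})) = 0 := by
      have h1 := hMON j
      rw [hsetc] at h1
      exact (prob_compl_eq_one_iff hms).mp h1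
    rw [ae_iff]
    convert h0 using 2
    ext ω
    simp only [Set.mem_setOf_eq, Set.mem_inter_iff, Set.mem_preimage, Set.mem_singleton_iff]
    cases hw0 : W j false ω <;> cases hw1 : W j true ω <;> simp
  -- difference identity per j
  have hdiff : ∀ j : Fin (T + 1),
      (fun ω => (μ⟦W j true ⁻¹' {true} | m0⟧) ω - (μ⟦W j false ⁻¹' {true} | m0⟧) ω)
        =ᵐ[μ] μ⟦(fun ω => (W j false ω, W j true ω)) ⁻¹' {x : Bool × Bool | x.1 < x.2} | m0⟧ := by
    intro j
    have hint1 : Integrable ((W j true ⁻¹' {true}).indicator fun _ => (1:ℝ)) μ :=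
      integrable_indicator_one' μ ((hW j true) (measurableSet_singleton _))
    have hint0 : Integrable ((W j false ⁻¹' {true}).indicator fun _ => (1:ℝ)) μ :=
      integrable_indicator_one' μ ((hW j false) (measurableSet_singleton _))
    have hsub := condExp_sub (m := m0) (μ := μ) hint1 hint0
    have hcong : (fun ω => (W j true ⁻¹' {true}).indicator (fun _ => (1:ℝ)) ω
          - (W j false ⁻¹' {true}).indicator (fun _ => (1:ℝ)) ω)
        =ᵐ[μ] ((fun ω => (W j false ω, W j true ω)) ⁻¹' {x : Bool × Bool | x.1 < x.2}).indicator
            (fun _ => (1:ℝ)) := by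
      filter_upwards [hMON' j] with ω hω
      have hmem : (ω ∈ (fun ω' => (W j false ω', W j true ω')) ⁻¹'
          {x : Bool × Bool | x.1 < x.2}) ↔ W j false ω < W j true ω := Iff.rfl
      cases h0 : W j false ω <;> cases h1 : W j true ω
      · simp [Set.indicator_apply, Set.mem_preimage, hmem, h0, h1]
      · simp [Set.indicator_apply, Set.mem_preimage, hmem, h0, h1]
      · rw [h0, h1] at hω
        exact absurd hω (by decide)
      · simp [Set.indicator_apply, Set.mem_preimage, hmem, h0, h1]
    calc (fun ω => (μ⟦W j true ⁻¹' {true} | m0⟧) ω - (μ⟦W j false ⁻¹' {true} | m0⟧) ω)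
        = μ[(W j true ⁻¹' {true}).indicator (fun _ => (1:ℝ)) | m0]
            - μ[(W j false ⁻¹' {true}).indicator (fun _ => (1:ℝ)) | m0] := by
          funext ω
          simp [Pi.sub_apply]
      _ =ᵐ[μ] μ[(fun ω => (W j true ⁻¹' {true}).indicator (fun _ => (1:ℝ)) ω
            - (W j false ⁻¹' {true}).indicator (fun _ => (1:ℝ)) ω) | m0] := hsub.symm
      _ =ᵐ[μ] μ⟦(fun ω => (W j false ω, W j true ω)) ⁻¹' {x : Bool × Bool | x.1 < x.2} | m0⟧ :=
          condExp_congr_ae hcong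
  -- the left-hand side
  have hLset : {ω | ∀ j, W j false ω < W j true ω}
      = ⋂ j, (fun ω => (W j false ω, W j true ω)) ⁻¹' {x : Bool × Bool | x.1 < x.2} := by
    ext ω
    simp [Set.mem_iInter]
  have hLHS : μ[Set.indicator {ω | ∀ j, W j false ω < W j true ω} (fun _ => (1:ℝ)) | m0]
      =ᵐ[μ] fun ω => ∏ j, ((μ⟦W j true ⁻¹' {true} | m0⟧) ω - (μ⟦W j false ⁻¹' {true} | m0⟧) ω) := by
    rw [hLset]
    refine (hCIprod (fun _ => {x : Bool × Bool | x.1 < x.2})).trans ?_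
    have hall : ∀ᵐ ω ∂μ, ∀ j : Fin (T + 1),
        (μ⟦(fun ω' => (W j false ω', W j true ω')) ⁻¹' {x : Bool × Bool | x.1 < x.2} | m0⟧) ω
          = (μ⟦W j true ⁻¹' {true} | m0⟧) ω - (μ⟦W j false ⁻¹' {true} | m0⟧) ω :=
      ae_all_iff.mpr fun j => (hdiff j).symm
    filter_upwards [hall] with ω hω
    exact Finset.prod_congr rfl fun j _ => hω j
  -- the sets B_i and their measurability
  set Bi : (Fin (T + 1) → Bool) → Set Ω := fun i => ⋂ j, W j (i j) ⁻¹' {true} with hBidef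
  have hBiO : ∀ i, MeasurableSet[mO] (Bi i) := by
    intro i
    refine MeasurableSet.iInter fun j => ?_
    have hle : MeasurableSpace.comap (W j (i j)) inferInstance ≤ mO := by
      rw [hmO]
      exact le_sup_of_le_left
        (le_sup_of_le_right (le_iSup_of_le j (le_iSup_of_le (i j) le_rfl)))
    exact hle _ ⟨{true}, measurableSet_singleton _, rfl⟩
  -- rewrite of the RHS integrand
  have hRfun : (fun ω => (∏ j, ((Wobs j ω).toNat : ℝ)) *
        ∑ i : Fin (T + 1) → Bool, ∏ j,
          ((-1 : ℝ) ^ (1 - (i j).toNat) * (if Z j ω = i j then (1 : ℝ) else 0) /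
            (μ[fun ω' => if Z j ω' = i j then (1 : ℝ) else 0 | G j]) ω))
      = fun ω => ∑ i : Fin (T + 1) → Bool, (∏ j, (-1 : ℝ) ^ (1 - (i j).toNat)) *
          ((Bi i).indicator (fun _ => (1:ℝ)) ω *
            ∏ j, ((Z j ⁻¹' {i j}).indicator (fun _ => (1:ℝ)) ω
              * ((μ⟦Z j ⁻¹' {i j} | G j⟧) ω)⁻¹)) := by
    funext ω
    rw [Finset.mul_sum]
    refine Finset.sum_congr rfl fun i _ => ?_
    have hu : ∀ j : Fin (T + 1), (if Z j ω = i j then (1:ℝ) else 0)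
        = (Z j ⁻¹' {i j}).indicator (fun _ => (1:ℝ)) ω := fun j => congrFun (hif_eq j (i j)) ω
    have hq : ∀ j : Fin (T + 1), (μ[fun ω' => if Z j ω' = i j then (1 : ℝ) else 0 | G j])
        = μ⟦Z j ⁻¹' {i j} | G j⟧ := fun j => by rw [hif_eq j (i j)]
    have hWtn : ∀ j : Fin (T + 1), ((Wobs j ω).toNat : ℝ) *
          ((Z j ⁻¹' {i j}).indicator (fun _ => (1:ℝ)) ω * ((μ⟦Z j ⁻¹' {i j} | G j⟧) ω)⁻¹)
        = ((W j (i j) ω).toNat : ℝ) *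
          ((Z j ⁻¹' {i j}).indicator (fun _ => (1:ℝ)) ω * ((μ⟦Z j ⁻¹' {i j} | G j⟧) ω)⁻¹) := by
      intro j
      by_cases hz : Z j ω = i j
      · rw [hWobs j ω, hz]
      · have : (Z j ⁻¹' {i j}).indicator (fun _ => (1:ℝ)) ω = 0 := by
          simp [Set.indicator_apply, hz]
        rw [this]
        ring
    have hBtn : (∏ j, ((W j (i j) ω).toNat : ℝ)) = (Bi i).indicator (fun _ => (1:ℝ)) ω := by
      by_cases hall : ω ∈ Bi i
      · have h1 : ∀ j : Fin (T + 1), W j (i j) ω = true := by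
          intro j
          have := Set.mem_iInter.mp hall j
          simpa using this
        rw [Set.indicator_of_mem hall]
        rw [Finset.prod_eq_one fun j _ => by rw [h1 j]; norm_num]
      · obtain ⟨j, hj⟩ : ∃ j : Fin (T + 1), W j (i j) ω ≠ true := by
          by_contra hcon
          push_neg at hcon
          exact hall (Set.mem_iInter.mpr fun j => by simp [hcon j])
        rw [Set.indicator_of_notMem hall]
        refine Finset.prod_eq_zero (Finset.mem_univ j) ?_
        have hj' : W j (i j) ω = false := by
          cases hc : W j (i j) ω
          · rfl
          · exact absurd hc hj
        rw [hj']
        norm_num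
    calc (∏ j, ((Wobs j ω).toNat : ℝ)) * ∏ j,
          ((-1 : ℝ) ^ (1 - (i j).toNat) * (if Z j ω = i j then (1 : ℝ) else 0) /
            (μ[fun ω' => if Z j ω' = i j then (1 : ℝ) else 0 | G j]) ω)
        = (∏ j, ((Wobs j ω).toNat : ℝ)) * ∏ j,
          ((-1 : ℝ) ^ (1 - (i j).toNat) * ((Z j ⁻¹' {i j}).indicator (fun _ => (1:ℝ)) ω
            * ((μ⟦Z j ⁻¹' {i j} | G j⟧) ω)⁻¹)) := by
          refine congrArg _ (Finset.prod_congr rfl fun j _ => ?_)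
          rw [hq j, hu j, div_eq_mul_inv, mul_assoc]
      _ = (∏ j, (-1 : ℝ) ^ (1 - (i j).toNat)) * ((∏ j, ((Wobs j ω).toNat : ℝ)) *
          ∏ j, ((Z j ⁻¹' {i j}).indicator (fun _ => (1:ℝ)) ω
            * ((μ⟦Z j ⁻¹' {i j} | G j⟧) ω)⁻¹)) := by
          rw [Finset.prod_mul_distrib]
          ring
      _ = (∏ j, (-1 : ℝ) ^ (1 - (i j).toNat)) * ((Bi i).indicator (fun _ => (1:ℝ)) ω *
          ∏ j, ((Z j ⁻¹' {i j}).indicator (fun _ => (1:ℝ)) ω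
            * ((μ⟦Z j ⁻¹' {i j} | G j⟧) ω)⁻¹)) := by
          congr 1
          rw [← Finset.prod_mul_distrib]
          rw [Finset.prod_congr rfl fun j _ => hWtn j]
          rw [Finset.prod_mul_distrib, hBtn]
  -- conditional expectation of the RHS
  have hRHS : μ[(fun ω => (∏ j, ((Wobs j ω).toNat : ℝ)) *
        ∑ i : Fin (T + 1) → Bool, ∏ j,
          ((-1 : ℝ) ^ (1 - (i j).toNat) * (if Z j ω = i j then (1 : ℝ) else 0) /
            (μ[fun ω' => if Z j ω' = i j then (1 : ℝ) else 0 | G j]) ω)) | m0]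
      =ᵐ[μ] fun ω => ∑ i : Fin (T + 1) → Bool,
        (∏ j, (-1 : ℝ) ^ (1 - (i j).toNat)) * (μ⟦Bi i | m0⟧) ω := by
    rw [hRfun]
    have hsum : (fun ω => ∑ i : Fin (T + 1) → Bool, (∏ j, (-1 : ℝ) ^ (1 - (i j).toNat)) *
          ((Bi i).indicator (fun _ => (1:ℝ)) ω *
            ∏ j, ((Z j ⁻¹' {i j}).indicator (fun _ => (1:ℝ)) ω
              * ((μ⟦Z j ⁻¹' {i j} | G j⟧) ω)⁻¹)))
        = ∑ i ∈ (Finset.univ : Finset (Fin (T + 1) → Bool)),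
            (fun ω => (∏ j, (-1 : ℝ) ^ (1 - (i j).toNat)) *
              ((Bi i).indicator (fun _ => (1:ℝ)) ω *
                ∏ j, ((Z j ⁻¹' {i j}).indicator (fun _ => (1:ℝ)) ω
                  * ((μ⟦Z j ⁻¹' {i j} | G j⟧) ω)⁻¹))) := by
      funext ω
      rw [Finset.sum_apply]
    rw [hsum]
    have hint : ∀ i : Fin (T + 1) → Bool,
        Integrable (fun ω => (∏ j, (-1 : ℝ) ^ (1 - (i j).toNat)) *
          ((Bi i).indicator (fun _ => (1:ℝ)) ω *
            ∏ j, ((Z j ⁻¹' {i j}).indicator (fun _ => (1:ℝ)) ω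
              * ((μ⟦Z j ⁻¹' {i j} | G j⟧) ω)⁻¹))) μ :=
      fun i => ((keyA i (hBiO i)).1).const_mul _
    refine (condExp_finsetSum (fun i _ => hint i) _).trans ?_
    have hterm : ∀ i : Fin (T + 1) → Bool,
        μ[(fun ω => (∏ j, (-1 : ℝ) ^ (1 - (i j).toNat)) *
          ((Bi i).indicator (fun _ => (1:ℝ)) ω *
            ∏ j, ((Z j ⁻¹' {i j}).indicator (fun _ => (1:ℝ)) ω
              * ((μ⟦Z j ⁻¹' {i j} | G j⟧) ω)⁻¹))) | m0]
        =ᵐ[μ] fun ω => (∏ j, (-1 : ℝ) ^ (1 - (i j).toNat)) * (μ⟦Bi i | m0⟧) ω := by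
      intro i
      have h1 : (fun ω => (∏ j, (-1 : ℝ) ^ (1 - (i j).toNat)) *
          ((Bi i).indicator (fun _ => (1:ℝ)) ω *
            ∏ j, ((Z j ⁻¹' {i j}).indicator (fun _ => (1:ℝ)) ω
              * ((μ⟦Z j ⁻¹' {i j} | G j⟧) ω)⁻¹)))
          = (∏ j, (-1 : ℝ) ^ (1 - (i j).toNat)) • (fun ω =>
            ((Bi i).indicator (fun _ => (1:ℝ)) ω *
            ∏ j, ((Z j ⁻¹' {i j}).indicator (fun _ => (1:ℝ)) ω
              * ((μ⟦Z j ⁻¹' {i j} | G j⟧) ω)⁻¹))) := by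
        funext ω
        simp [smul_eq_mul]
      rw [h1]
      refine (condExp_smul _ _ _).trans ?_
      filter_upwards [(keyA i (hBiO i)).2] with ω hω
      simp only [Pi.smul_apply, smul_eq_mul]
      rw [hω]
    have hall : ∀ᵐ ω ∂μ, ∀ i : Fin (T + 1) → Bool,
        (μ[(fun ω' => (∏ j, (-1 : ℝ) ^ (1 - (i j).toNat)) *
          ((Bi i).indicator (fun _ => (1:ℝ)) ω' *
            ∏ j, ((Z j ⁻¹' {i j}).indicator (fun _ => (1:ℝ)) ω'
              * ((μ⟦Z j ⁻¹' {i j} | G j⟧) ω')⁻¹))) | m0]) ω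
          = (∏ j, (-1 : ℝ) ^ (1 - (i j).toNat)) * (μ⟦Bi i | m0⟧) ω :=
      ae_all_iff.mpr hterm
    filter_upwards [hall] with ω hω
    rw [Finset.sum_apply]
    exact Finset.sum_congr rfl fun i _ => hω i
  -- CI applied to the sets B_i
  have hBie : ∀ᵐ ω ∂μ, ∀ i : Fin (T + 1) → Bool,
      (μ⟦Bi i | m0⟧) ω = ∏ j, (μ⟦W j (i j) ⁻¹' {true} | m0⟧) ω := by
    refine ae_all_iff.mpr fun i => ?_
    have h1 : Bi i = ⋂ j, (fun ω => (W j false ω, W j true ω)) ⁻¹'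
        {x : Bool × Bool | (bif i j then x.2 else x.1) = true} :=
      Set.iInter_congr fun j => hseteq j (i j)
    rw [h1]
    refine (hCIprod _).trans ?_
    refine Eventually.of_forall fun ω => ?_
    refine Finset.prod_congr rfl fun j _ => ?_
    rw [hseteq j (i j)]
  -- algebraic expansion, pointwise
  have halg : ∀ ω : Ω, (∏ j, ((μ⟦W j true ⁻¹' {true} | m0⟧) ω - (μ⟦W j false ⁻¹' {true} | m0⟧) ω))
      = ∑ i : Fin (T + 1) → Bool, (∏ j, (-1 : ℝ) ^ (1 - (i j).toNat)) *
          ∏ j, (μ⟦W j (i j) ⁻¹' {true} | m0⟧) ω := by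
    intro ω
    have h1 : ∀ j : Fin (T + 1),
        (μ⟦W j true ⁻¹' {true} | m0⟧) ω - (μ⟦W j false ⁻¹' {true} | m0⟧) ω
          = ∑ b ∈ (Finset.univ : Finset Bool),
              (-1 : ℝ) ^ (1 - b.toNat) * (μ⟦W j b ⁻¹' {true} | m0⟧) ω := by
      intro j
      rw [Fintype.sum_bool]
      simp only [Bool.toNat_true, Bool.toNat_false, Nat.sub_self, pow_zero, pow_one,
        Nat.sub_zero]
      ring
    rw [Finset.prod_congr rfl fun j _ => h1 j]
    rw [Finset.prod_univ_sum]
    rw [Fintype.piFinset_univ]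
    refine Finset.sum_congr rfl fun i _ => ?_
    rw [Finset.prod_mul_distrib]
  -- put everything together
  refine hLHS.trans (EventuallyEq.trans ?_ hRHS.symm)
  filter_upwards [hBie] with ω hω
  rw [halg ω]
  exact Finset.sum_congr rfl fun i _ => by rw [hω i]
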